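/- For every causal tripartite correlation P(a,b,c|x,y,z) with binary inputs x,y,z ∈ {0,1} and binary outputs a,b,c ∈ {0,1}, the causal inequality I_4 ≥ 0 holds, where I_4 = 2 − P(0,0,0|0,0,0) − P(0,1,1|1,1,0) − P(1,0,1|0,1,1) − P(1,1,0|1,0,1). -/
import Mathlib


/-- A correlation for the parties in the finite set `S`, where party `i` has input set `X i`
and output set `A i`: a real number `P x a` for each assignment of inputs `x` and outputs `a`
for the parties in `S`. -/
def Corr {ι : Type} (X A : ι → Type) (S : Finset ι) : Type :=
  ((i : {j // j ∈ S}) → X i.1) → ((i : {j // j ∈ S}) → A i.1) → ℝ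

/-- `p` is a probability distribution on the finite type `α`. -/
def IsProbDist {α : Type} [Fintype α] (p : α → ℝ) : Prop :=
  (∀ a, 0 ≤ p a) ∧ ∑ a, p a = 1

/-- Restriction of a tuple indexed by `S` to a subset `T ⊆ S`. -/
def restr {ι : Type} {X : ι → Type} {S T : Finset ι} (h : T ⊆ S)
    (x : (i : {j // j ∈ S}) → X i.1) : (i : {j // j ∈ T}) → X i.1 :=
  fun i => x ⟨i.1, h i.2⟩

theorem erase_sub {ι : Type} [DecidableEq ι] (S : Finset ι) (k : ι) : S.erase k ⊆ S :=
  fun _ hi => Finset.mem_of_mem_erase hi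

theorem sdiff_sub {ι : Type} [DecidableEq ι] (S K : Finset ι) : S \ K ⊆ S :=
  fun _ hi => (Finset.mem_sdiff.mp hi).1

/-- Combine a tuple on `K` and a tuple on `S \ K` into a tuple on `S`. -/
def glue {ι : Type} [DecidableEq ι] {X : ι → Type} {S K : Finset ι} (_ : K ⊆ S)
    (u : (i : {j // j ∈ K}) → X i.1) (v : (i : {j // j ∈ S \ K}) → X i.1) :
    (i : {j // j ∈ S}) → X i.1 :=
  fun i => if h : i.1 ∈ K then u ⟨i.1, h⟩ else v ⟨i.1, Finset.mem_sdiff.mpr ⟨i.2, h⟩⟩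

/-- Insert a value for party `k` into a tuple on `S.erase k`, giving a tuple on `S`. -/
def ins {ι : Type} [DecidableEq ι] {X : ι → Type} {S : Finset ι} {k : ι} (_ : k ∈ S)
    (xk : X k) (u : (i : {j // j ∈ S.erase k}) → X i.1) : (i : {j // j ∈ S}) → X i.1 :=
  fun i => if h : i.1 = k then cast (congrArg X h.symm) xk
    else u ⟨i.1, Finset.mem_erase.mpr ⟨h, i.2⟩⟩

/-- Causal correlations, defined by induction on the number of parties: any single-party
probability distribution is causal; a correlation on a set `S` of at least two parties is
causal iff it is a convex combination, over choices of a party `k ∈ S` acting first, of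
products of a single-party distribution for `k` with causal correlations for the remaining
parties `S.erase k` that may depend on the input and output of party `k`. -/
inductive IsCausal {ι : Type} [DecidableEq ι] (X A : ι → Type) [∀ i, Fintype (A i)] :
    (S : Finset ι) → Corr X A S → Prop
  | base (k : ι) (P : Corr X A {k}) (hP : ∀ x, IsProbDist (P x)) : IsCausal X A {k} P
  | step (S : Finset ι) (hS : 2 ≤ S.card) (P : Corr X A S)
      (q : {j // j ∈ S} → ℝ)
      (Pfirst : (k : {j // j ∈ S}) → X k.1 → A k.1 → ℝ)
      (Prest : (k : {j // j ∈ S}) → X k.1 → A k.1 → Corr X A (S.erase k.1))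
      (hq : ∀ k, 0 ≤ q k)
      (hq1 : ∑ k ∈ S.attach, q k = 1)
      (hPfirst : ∀ k xk, IsProbDist (Pfirst k xk))
      (hPrest : ∀ k xk ak, IsCausal X A (S.erase k.1) (Prest k xk ak))
      (hP : ∀ x a, P x a = ∑ k ∈ S.attach, q k * Pfirst k (x k) (a k) *
            Prest k (x k) (a k) (restr (erase_sub S k.1) x) (restr (erase_sub S k.1) a)) :
      IsCausal X A S P

/-- Tripartite correlations with binary inputs and binary outputs for the three parties
`A`, `B`, `C` (encoding input/output `0` as `false` and `1` as `true`). -/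
abbrev Corr3 : Type := Corr (fun _ : Fin 3 => Bool) (fun _ : Fin 3 => Bool) Finset.univ

/-- The triple `(u, v, w)` as an input (or output) assignment for the three parties. -/
def t3 (u v w : Bool) : (i : {j // j ∈ (Finset.univ : Finset (Fin 3))}) → Bool :=
  fun i => ![u, v, w] i.1

lemma prob_le_one {α : Type} [Fintype α] {p : α → ℝ} (h : IsProbDist p) (a : α) : p a ≤ 1 := by
  rw [← h.2]
  exact Finset.single_le_sum (fun i _ => h.1 i) (Finset.mem_univ a)

lemma causal_nonneg {ι : Type} [DecidableEq ι] {X A : ι → Type} [∀ i, Fintype (A i)]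
    {S : Finset ι} {P : Corr X A S} (h : IsCausal X A S P) : ∀ x a, 0 ≤ P x a := by
  induction h with
  | base k P hP => exact fun x a => (hP x).1 a
  | step S hS P q Pf Pr hq hq1 hPf hPr hPeq ih =>
    intro x a
    rw [hPeq]
    refine Finset.sum_nonneg fun k _ => ?_
    exact mul_nonneg (mul_nonneg (hq k) ((hPf k (x k)).1 (a k))) (ih k (x k) (a k) _ _)

lemma causal_le_one {ι : Type} [DecidableEq ι] {X A : ι → Type} [∀ i, Fintype (A i)]
    {S : Finset ι} {P : Corr X A S} (h : IsCausal X A S P) : ∀ x a, P x a ≤ 1 := by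
  induction h with
  | base k P hP => exact fun x a => prob_le_one (hP x) a
  | step S hS P q Pf Pr hq hq1 hPf hPr hPeq ih =>
    intro x a
    rw [hPeq, ← hq1]
    refine Finset.sum_le_sum fun k _ => ?_
    have h1 : 0 ≤ Pf k (x k) (a k) := (hPf k (x k)).1 (a k)
    have h2 : Pf k (x k) (a k) ≤ 1 := prob_le_one (hPf k (x k)) (a k)
    have h3 : 0 ≤ Pr k (x k) (a k) (restr (erase_sub S k.1) x) (restr (erase_sub S k.1) a) :=
      causal_nonneg (hPr k (x k) (a k)) _ _
    have h4 : Pr k (x k) (a k) (restr (erase_sub S k.1) x) (restr (erase_sub S k.1) a) ≤ 1 :=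
      ih k (x k) (a k) _ _
    calc q k * Pf k (x k) (a k) * Pr k (x k) (a k) (restr (erase_sub S k.1) x)
          (restr (erase_sub S k.1) a)
        ≤ q k * Pf k (x k) (a k) := mul_le_of_le_one_right (mul_nonneg (hq k) h1) h4
      _ ≤ q k * 1 := mul_le_mul_of_nonneg_left h2 (hq k)
      _ = q k := mul_one _

lemma causal_decomp {ι : Type} [DecidableEq ι] {X A : ι → Type} [∀ i, Fintype (A i)]
    {S : Finset ι} {P : Corr X A S} (h : IsCausal X A S P) (hS2 : 2 ≤ S.card) :
    ∃ (q : {j // j ∈ S} → ℝ)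
      (Pfirst : (k : {j // j ∈ S}) → X k.1 → A k.1 → ℝ)
      (Prest : (k : {j // j ∈ S}) → X k.1 → A k.1 → Corr X A (S.erase k.1)),
      (∀ k, 0 ≤ q k) ∧ (∑ k ∈ S.attach, q k = 1) ∧
      (∀ k xk, IsProbDist (Pfirst k xk)) ∧
      (∀ k xk ak, IsCausal X A (S.erase k.1) (Prest k xk ak)) ∧
      (∀ x a, P x a = ∑ k ∈ S.attach, q k * Pfirst k (x k) (a k) *
            Prest k (x k) (a k) (restr (erase_sub S k.1) x) (restr (erase_sub S k.1) a)) := by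
  cases h with
  | base k P hP => simp at hS2
  | step S hS P q Pf Pr hq hq1 hPf hPr hPeq =>
    exact ⟨q, Pf, Pr, hq, hq1, hPf, hPr, hPeq⟩

lemma vec_mk0 {α : Type} (u v w : α) (h : (0:ℕ) < 3) : ![u, v, w] ⟨0, h⟩ = u := rfl
lemma vec_mk1 {α : Type} (u v w : α) (h : (1:ℕ) < 3) : ![u, v, w] ⟨1, h⟩ = v := rfl
lemma vec_mk2 {α : Type} (u v w : α) (h : (2:ℕ) < 3) : ![u, v, w] ⟨2, h⟩ = w := rfl

lemma pair_bound (qk P1 P2 P3 P4 R1 R2 R3 R4 : ℝ)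
    (hq : 0 ≤ qk) (h1 : 0 ≤ P1) (h2 : 0 ≤ P2) (h3 : 0 ≤ P3) (h4 : 0 ≤ P4)
    (hsum : P1 + P2 + P3 + P4 = 2)
    (hR1 : R1 ≤ 1) (hR2 : R2 ≤ 1) (hR3 : R3 ≤ 1) (hR4 : R4 ≤ 1) :
    qk * P1 * R1 + qk * P2 * R2 + qk * P3 * R3 + qk * P4 * R4 ≤ 2 * qk := by
  have t1 : qk * P1 * R1 ≤ qk * P1 := mul_le_of_le_one_right (mul_nonneg hq h1) hR1
  have t2 : qk * P2 * R2 ≤ qk * P2 := mul_le_of_le_one_right (mul_nonneg hq h2) hR2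
  have t3 : qk * P3 * R3 ≤ qk * P3 := mul_le_of_le_one_right (mul_nonneg hq h3) hR3
  have t4 : qk * P4 * R4 ≤ qk * P4 := mul_le_of_le_one_right (mul_nonneg hq h4) hR4
  have e : qk * P1 + qk * P2 + qk * P3 + qk * P4 = 2 * qk := by
    calc qk * P1 + qk * P2 + qk * P3 + qk * P4 = qk * (P1 + P2 + P3 + P4) := by ring
      _ = qk * 2 := by rw [hsum]
      _ = 2 * qk := by ring
  linarith

/-- every causal tripartite correlation with binary inputs and outputs
satisfies the causal inequality `I_4 ≥ 0`, i.e.,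
`2 - P(000|000) - P(011|110) - P(101|011) - P(110|101) ≥ 0`. -/
theorem causal_inequality_I4 (P : Corr3)
    (hP : IsCausal (fun _ : Fin 3 => Bool) (fun _ : Fin 3 => Bool) Finset.univ P) :
    0 ≤ 2 - P (t3 false false false) (t3 false false false)
      - P (t3 true true false) (t3 false true true)
      - P (t3 false true true) (t3 true false true)
      - P (t3 true false true) (t3 true true false) := by
  obtain ⟨q, Pf, Pr, hq, hq1, hPf, hPr, hPeq⟩ := causal_decomp hP (by decide)
  set T : ((i : {j // j ∈ (Finset.univ : Finset (Fin 3))}) → Bool) →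
      ((i : {j // j ∈ (Finset.univ : Finset (Fin 3))}) → Bool) →
      {j // j ∈ (Finset.univ : Finset (Fin 3))} → ℝ :=
    fun x a k => q k * Pf k (x k) (a k) *
      Pr k (x k) (a k) (restr (X := fun _ : Fin 3 => Bool) (erase_sub Finset.univ k.1) x)
        (restr (X := fun _ : Fin 3 => Bool) (erase_sub Finset.univ k.1) a)
    with hT
  have hPT : ∀ x a, P x a = ∑ k ∈ Finset.univ.attach, T x a k := hPeq
  rw [hPT, hPT, hPT, hPT]
  have key : ∀ k ∈ (Finset.univ : Finset (Fin 3)).attach,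
      T (t3 false false false) (t3 false false false) k
      + T (t3 true true false) (t3 false true true) k
      + T (t3 false true true) (t3 true false true) k
      + T (t3 true false true) (t3 true true false) k ≤ 2 * q k := by
    rintro ⟨i, hi⟩ -
    have hRle : ∀ (xk ak : Bool) x a,
        Pr ⟨i, hi⟩ xk ak (restr (X := fun _ : Fin 3 => Bool) (erase_sub Finset.univ i) x)
          (restr (X := fun _ : Fin 3 => Bool) (erase_sub Finset.univ i) a) ≤ 1 :=
      fun xk ak x a => causal_le_one (hPr ⟨i, hi⟩ xk ak) _ _
    have hPfnn : ∀ (xk ak : Bool), 0 ≤ Pf ⟨i, hi⟩ xk ak := fun xk ak => (hPf ⟨i, hi⟩ xk).1 ak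
    have hPfs : ∀ xk : Bool, Pf ⟨i, hi⟩ xk true + Pf ⟨i, hi⟩ xk false = 1 := by
      intro xk
      have := (hPf ⟨i, hi⟩ xk).2
      rwa [Fintype.sum_bool] at this
    fin_cases i <;>
      · simp only [hT, t3, vec_mk0, vec_mk1, vec_mk2]
        refine pair_bound _ _ _ _ _ _ _ _ _ (hq _) (hPfnn _ _) (hPfnn _ _) (hPfnn _ _)
          (hPfnn _ _) ?_ (hRle _ _ _ _) (hRle _ _ _ _) (hRle _ _ _ _) (hRle _ _ _ _)
        have e1 := hPfs false
        have e2 := hPfs true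
        linarith
  have hsum : ∑ k ∈ Finset.univ.attach, (T (t3 false false false) (t3 false false false) k
      + T (t3 true true false) (t3 false true true) k
      + T (t3 false true true) (t3 true false true) k
      + T (t3 true false true) (t3 true true false) k) ≤ 2 := by
    calc _ ≤ ∑ k ∈ Finset.univ.attach, 2 * q k := Finset.sum_le_sum key
      _ = 2 := by rw [← Finset.mul_sum, hq1, mul_one]
  rw [Finset.sum_add_distrib, Finset.sum_add_distrib, Finset.sum_add_distrib] at hsum
  linarith
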